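/- For all sets X, Y, every function f : X → Y and every family 𝒜 of subsets of X, the map δ commutes with taking double direct images: δ_Y({f[A] | A ∈ 𝒜}) = {f[B] | B ∈ δ_X(𝒜)}. In other words, δ is a natural transformation from the composite powerset functor PP to itself. -/

import Mathlib

/-- The canonical weak distributive law component `δ_X : PP X → PP X`. -/
def delta {X : Type*} (𝒜 : Set (Set X)) : Set (Set X) :=
  {B | B ⊆ ⋃₀ 𝒜 ∧ ∀ A ∈ 𝒜, (A ∩ B).Nonempty}

/-- δ is natural: it commutes with double direct images. -/
theorem delta_natural {X Y : Type*} (f : X → Y) (𝒜 : Set (Set X)) :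
    delta ((Set.image f) '' 𝒜) = (Set.image f) '' delta 𝒜 := by
  have hU : ⋃₀ ((Set.image f) '' 𝒜) = f '' ⋃₀ 𝒜 := by
    ext y
    simp [Set.mem_sUnion, Set.mem_image]
    tauto
  ext B
  constructor
  · rintro ⟨hBsub, hmeet⟩
    refine ⟨f ⁻¹' B ∩ ⋃₀ 𝒜, ⟨Set.inter_subset_right, ?_⟩, ?_⟩
    · intro A hA
      obtain ⟨y, hyA, hyB⟩ := hmeet (f '' A) ⟨A, hA, rfl⟩
      obtain ⟨x, hxA, rfl⟩ := hyA
      exact ⟨x, hxA, hyB, Set.mem_sUnion.mpr ⟨A, hA, hxA⟩⟩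
    · apply Set.Subset.antisymm
      · rintro y ⟨x, ⟨hx, _⟩, rfl⟩; exact hx
      · intro y hy
        have := hBsub hy
        rw [hU] at this
        obtain ⟨x, hx, rfl⟩ := this
        exact ⟨x, ⟨hy, hx⟩, rfl⟩
  · rintro ⟨C, ⟨hCsub, hCmeet⟩, rfl⟩
    constructor
    · rw [hU]; exact Set.image_mono hCsub
    · rintro A' ⟨A, hA, rfl⟩
      obtain ⟨x, hxA, hxC⟩ := hCmeet A hA
      exact ⟨f x, ⟨x, hxA, rfl⟩, ⟨x, hxC, rfl⟩⟩
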